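/- Let k be an algebraically closed field of characteristic 2 and ζ ∈ k a primitive 7th root of unity, a ∈ k with a^7 = 1. Then the map σ defined on k(t,x,y) with relation y^2 + y = t x^4 + (t + a^4)^7 by t ↦ ζ t, x ↦ ζ^{-1/4} x + ζ^{-1/4}(ζ^{1/4} + 1) a^6 + ζ^{-1/4}(ζ^{5/4} + 1) a^2 t, y ↦ y + 1 + (1 + ζ^2) a^6 t^2 + (1 + ζ^3) a^2 t^3 preserves the relation y^2 + y = t x^4 + (t+a^4)^7 and has order 14. -/

import Mathlib

/-- Over an algebraically closed field `k` of characteristic 2, let `ζ` be a primitive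
7th root of unity, `q = ζ^{1/4}` (i.e. `q⁴ = ζ`), and `a ∈ k` with `a⁷ = 1`. The
substitution `σ : (t,x,y) ↦ (ζt, q⁻¹x + q⁻¹(q+1)a⁶ + q⁻¹(q⁵+1)a²t,
y + 1 + (1+ζ²)a⁶t² + (1+ζ³)a²t³)` on the function field `k(t,x,y)` of the surface
`y² + y = tx⁴ + (t+a⁴)⁷` preserves the defining relation and has order 14. -/
theorem E7A1_supersingular_order14_automorphism (k : Type*) [Field k] [IsAlgClosed k]
    [CharP k 2]
    (ζ q a : k) (hζ7 : ζ ^ 7 = 1) (hζ1 : ζ ≠ 1) (hq : q ^ 4 = ζ) (ha : a ^ 7 = 1)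
    (K : Type*) [Field K] [Algebra (MvPolynomial (Fin 3) k) K]
    [IsFractionRing (MvPolynomial (Fin 3) k) K]
    [Algebra k K] [IsScalarTower k (MvPolynomial (Fin 3) k) K]
    (σ : K × K × K → K × K × K)
    (hσ : ∀ t x y : K, σ (t, x, y) =
      (algebraMap k K ζ * t,
       (algebraMap k K q)⁻¹ * x
         + (algebraMap k K q)⁻¹ * (algebraMap k K q + 1) * algebraMap k K a ^ 6
         + (algebraMap k K q)⁻¹ * (algebraMap k K q ^ 5 + 1) * algebraMap k K a ^ 2 * t,
       y + 1 + (1 + algebraMap k K ζ ^ 2) * algebraMap k K a ^ 6 * t ^ 2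
         + (1 + algebraMap k K ζ ^ 3) * algebraMap k K a ^ 2 * t ^ 3)) :
    (∀ t x y : K,
      y ^ 2 + y = t * x ^ 4 + (t + algebraMap k K a ^ 4) ^ 7 →
        (σ (t, x, y)).2.2 ^ 2 + (σ (t, x, y)).2.2 =
          (σ (t, x, y)).1 * (σ (t, x, y)).2.1 ^ 4
            + ((σ (t, x, y)).1 + algebraMap k K a ^ 4) ^ 7) ∧
    σ^[14] = id ∧ σ^[7] ≠ id ∧ σ^[2] ≠ id := by
  have h2k : (2 : k) = 0 := by exact_mod_cast CharP.cast_eq_zero k 2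
  have hq28 : q ^ 28 = 1 := by
    calc q ^ 28 = (q ^ 4) ^ 7 := by ring
    _ = 1 := by rw [hq, hζ7]
  have hq7 : q ^ 7 = 1 := by
    have h4 : (q ^ 7 - 1) ^ 4 = 0 := by
      linear_combination hq28 + (-2 * q ^ 21 + 3 * q ^ 14 - 2 * q ^ 7 + 1) * h2k
    have h0 : q ^ 7 - 1 = 0 := by
      exact pow_eq_zero_iff (by norm_num) |>.mp h4
    linear_combination h0
  set f := algebraMap k K with hfdef
  set Q := f q with hQdef
  set A := f a with hAdef
  have hQ7 : Q ^ 7 = 1 := by rw [hQdef, ← map_pow, hq7, map_one]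
  have hA7 : A ^ 7 = 1 := by rw [hAdef, ← map_pow, ha, map_one]
  have h2 : (2 : K) = 0 := by
    rw [show (2 : K) = f 2 from (map_ofNat f 2).symm, h2k, map_zero]
  have hQne : Q ≠ 0 := by
    intro h
    have : (1 : K) = 0 := by rw [← hQ7, h]; norm_num
    exact one_ne_zero this
  have hAne : A ≠ 0 := by
    intro h
    have : (1 : K) = 0 := by rw [← hA7, h]; norm_num
    exact one_ne_zero this
  have hQ1 : Q ≠ 1 := by
    intro h
    have hq1 : q = 1 := (algebraMap k K).injective (by rw [map_one]; exact h)
    exact hζ1 (by rw [← hq, hq1, one_pow])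
  have hZ : f ζ = Q ^ 4 := by rw [hQdef, ← map_pow, hq]
  have hQinv : Q⁻¹ = Q ^ 6 := inv_eq_of_mul_eq_one_right (by linear_combination hQ7)
  have hσ' : ∀ t x y : K, σ (t, x, y) =
      (Q ^ 4 * t,
       Q ^ 6 * x + Q ^ 6 * (Q + 1) * A ^ 6 + Q ^ 6 * (Q ^ 5 + 1) * A ^ 2 * t,
       y + 1 + (1 + Q ^ 8) * A ^ 6 * t ^ 2 + (1 + Q ^ 12) * A ^ 2 * t ^ 3) := by
    intro t x y
    rw [hσ, hQinv, hZ]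
    simp only [Prod.mk.injEq]
    refine ⟨trivial, trivial, by ring⟩
  have h7 : ∀ p : K × K × K, σ^[7] p = (p.1, p.2.1, p.2.2 + 1) := by
    rintro ⟨t, x, y⟩
    have e7 : σ^[7] (t, x, y) = σ (σ (σ (σ (σ (σ (σ (t, x, y))))))) := by
      rw [show (7 : ℕ) = 1 + 1 + 1 + 1 + 1 + 1 + 1 from rfl]
      simp only [Function.iterate_add_apply, Function.iterate_one]
    rw [e7]
    simp only [hσ']
    simp only [Prod.mk.injEq]
    refine ⟨?_, ?_, ?_⟩
    · linear_combination (t + Q^7*t + Q^14*t + Q^21*t) * hQ7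
    · linear_combination (x + 2*A^6 + 2*Q^2*A^6 + 2*Q^3*A^6 + 2*Q^4*A^2*t + 2*Q^5*A^6 + Q^6*A^6 + Q^7*x + Q^7*A^6 + 2*Q^9*A^2*t + 2*Q^9*A^6 + 2*Q^10*A^6 + 2*Q^11*A^2*t + Q^12*A^6 + Q^14*x + Q^14*A^6 + 2*Q^16*A^2*t + 2*Q^16*A^6 + 2*Q^17*A^6 + 2*Q^18*A^2*t + Q^18*A^6 + Q^21*x + Q^21*A^6 + 2*Q^23*A^2*t + 2*Q^23*A^6 + Q^24*A^6 + 2*Q^25*A^2*t + 2*Q^27*A^2*t + Q^28*x + 2*Q^28*A^2*t + Q^28*A^6 + 2*Q^29*A^2*t + 2*Q^29*A^6 + Q^30*A^2*t + Q^30*A^6 + Q^32*A^2*t + 2*Q^33*A^2*t + Q^34*A^2*t + Q^35*x + Q^35*A^2*t + Q^35*A^6 + Q^36*A^2*t + Q^36*A^6 + Q^38*A^2*t + Q^40*A^2*t) * hQ7 + (A^6 + Q^2*A^6 + Q^3*A^6 + Q^4*A^2*t + Q^5*A^6 + Q^6*A^6 + Q^9*A^2*t + Q^18*A^6 + Q^27*A^2*t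 + Q^28*A^2*t + Q^29*A^2*t + Q^29*A^6 + Q^33*A^2*t + Q^38*A^2*t) * h2
    · linear_combination (A^2*t^3 + A^6*t^2 + Q^7*A^2*t^3 + Q^7*A^6*t^2 + Q^14*A^2*t^3 + Q^14*A^6*t^2 + Q^21*A^2*t^3 + Q^21*A^6*t^2 + Q^28*A^2*t^3 + Q^28*A^6*t^2 + Q^35*A^2*t^3 + Q^35*A^6*t^2 + Q^42*A^2*t^3 + Q^42*A^6*t^2 + Q^49*A^2*t^3 + Q^49*A^6*t^2 + Q^56*A^2*t^3 + Q^63*A^2*t^3 + Q^70*A^2*t^3 + Q^77*A^2*t^3) * hQ7 + (3 + A^2*t^3 + A^6*t^2 + Q^8*A^6*t^2 + Q^12*A^2*t^3 + Q^16*A^6*t^2 + Q^24*A^2*t^3 + Q^24*A^6*t^2 + Q^32*A^6*t^2 + Q^36*A^2*t^3 + Q^40*A^6*t^2 + Q^48*A^2*t^3 + Q^48*A^6*t^2 + Q^60*A^2*t^3 + Q^72*A^2*t^3) * h2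
  refine ⟨?_, ?_, ?_, ?_⟩
  · intro t x y h
    simp only [hσ']
    linear_combination h + (t*x^4 + t^7 + A^8*t^5 + A^24*t + Q*A^6*t^2 + Q*A^20*t^2 + Q^4*A^24*t + Q^5*A^2*t^3 + Q^5*A^16*t^3 + Q^7*t*x^4 + Q^7*t^7 + Q^7*A^8*t^5 + Q^7*A^24*t + Q^11*A^24*t + Q^14*t*x^4 + Q^14*t^7 + Q^14*A^8*t^5 + Q^14*A^24*t + Q^18*A^24*t + Q^20*A^8*t^5 + Q^21*t*x^4 + Q^21*t^7 + Q^21*A^8*t^5 + Q^21*A^24*t + Q^25*A^24*t + Q^27*A^8*t^5 + Q^34*A^8*t^5 + Q^41*A^8*t^5) * hQ7 + (2*A*t^5 + A^2*t^3 + A^6*t^2 + A^9*t^3 + A^13*t^2 + Q*A^6*t^2 + Q*A^13*t^2 + Q^5*A^2*t^3 + Q^5*A^9*t^3) * hA7 + (1 + y + t*x^4 + t^7 + A*t^5 + 2*A^2*t^3 + A^2*t^3*y + 4*A^4*t^6 + 2*A^6*t^2 + A^6*t^2*y + 11*A^8*t^5 + 18*A^12*t^4 + 17*A^16*t^3 +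 10*A^20*t^2 + 4*A^24*t + Q*A^6*t^2 + (-3)*Q^4*A^24*t + Q^5*A^2*t^3 + Q^8*A^6*t^2 + Q^8*A^6*t^2*y + Q^8*A^8*t^5 + Q^8*A^12*t^4 + (-11)*Q^8*A^20*t^2 + Q^12*A^2*t^3 + Q^12*A^2*t^3*y + Q^12*A^4*t^6 + Q^12*A^8*t^5 + (-18)*Q^12*A^16*t^3 + (-17)*Q^16*A^12*t^4 + (-9)*Q^20*A^8*t^5 + (-3)*Q^24*A^4*t^6 + (-1)*Q^28*t*x^4 + (-1)*Q^28*t^7 + (-2)*Q^28*A^2*t^2*x^3 + (-3)*Q^28*A^4*t^3*x^2 + (-2)*Q^28*A^6*t*x^3 + (-2)*Q^28*A^6*t^4*x + (-6)*Q^28*A^8*t^2*x^2 + (-1)*Q^28*A^8*t^5 + (-6)*Q^28*A^10*t^3*x + (-3)*Q^28*A^12*t*x^2 + (-2)*Q^28*A^12*t^4 + (-6)*Q^28*A^14*t^2*x + (-3)*Q^28*A^16*t^3 + (-2)*Q^28*A^18*t*x + (-2)*Q^28*A^20*t^2 + (-1)*Q^28*A^24*t + (-2)*Q^29*A^6*t*x^3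 + (-6)*Q^29*A^8*t^2*x^2 + (-6)*Q^29*A^10*t^3*x + (-6)*Q^29*A^12*t*x^2 + (-2)*Q^29*A^12*t^4 + (-12)*Q^29*A^14*t^2*x + (-6)*Q^29*A^16*t^3 + (-6)*Q^29*A^18*t*x + (-6)*Q^29*A^20*t^2 + (-2)*Q^29*A^24*t + (-3)*Q^30*A^12*t*x^2 + (-6)*Q^30*A^14*t^2*x + (-3)*Q^30*A^16*t^3 + (-6)*Q^30*A^18*t*x + (-6)*Q^30*A^20*t^2 + (-3)*Q^30*A^24*t + (-2)*Q^31*A^18*t*x + (-2)*Q^31*A^20*t^2 + (-2)*Q^31*A^24*t + (-1)*Q^32*A^24*t + (-2)*Q^33*A^2*t^2*x^3 + (-6)*Q^33*A^4*t^3*x^2 + (-6)*Q^33*A^6*t^4*x + (-6)*Q^33*A^8*t^2*x^2 + (-2)*Q^33*A^8*t^5 + (-12)*Q^33*A^10*t^3*x + (-6)*Q^33*A^12*t^4 + (-6)*Q^33*A^14*t^2*x + (-6)*Q^33*A^16*t^3 + (-2)*Q^33*A^20*t^2 + (-6)*Q^34*A^8*t^2*x^2 + (-12)*Q^34*A^10*t^3*x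 + (-6)*Q^34*A^12*t^4 + (-12)*Q^34*A^14*t^2*x + (-12)*Q^34*A^16*t^3 + (-6)*Q^34*A^20*t^2 + (-6)*Q^35*A^14*t^2*x + (-6)*Q^35*A^16*t^3 + (-6)*Q^35*A^20*t^2 + (-2)*Q^36*A^20*t^2 + (-3)*Q^38*A^4*t^3*x^2 + (-6)*Q^38*A^6*t^4*x + (-3)*Q^38*A^8*t^5 + (-6)*Q^38*A^10*t^3*x + (-6)*Q^38*A^12*t^4 + (-3)*Q^38*A^16*t^3 + (-6)*Q^39*A^10*t^3*x + (-6)*Q^39*A^12*t^4 + (-6)*Q^39*A^16*t^3 + (-3)*Q^40*A^16*t^3 + (-2)*Q^43*A^6*t^4*x + (-2)*Q^43*A^8*t^5 + (-2)*Q^43*A^12*t^4 + (-2)*Q^44*A^12*t^4 + (-1)*Q^48*A^8*t^5) * h2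
  · funext p
    have e14 : σ^[14] p = σ^[7] (σ^[7] p) := by
      rw [← Function.iterate_add_apply]
    rw [e14, h7, h7]
    have hy : p.2.2 + 1 + 1 = p.2.2 := by linear_combination h2
    simp only [id_eq]
    calc ((p.1, p.2.1, p.2.2 + 1).1, (p.1, p.2.1, p.2.2 + 1).2.1,
        (p.1, p.2.1, p.2.2 + 1).2.2 + 1) = (p.1, p.2.1, p.2.2 + 1 + 1) := rfl
    _ = (p.1, p.2.1, p.2.2) := by rw [hy]
    _ = p := rfl
  · intro hid
    have e := (h7 (0, 0, 0)).symm.trans (congrFun hid (0, 0, 0))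
    simp only [id_eq, Prod.mk.injEq] at e
    have : (0 : K) + 1 = 0 := e.2.2
    simp at this
  · intro hid
    have e := congrFun hid ((0 : K), (0 : K), (0 : K))
    have e2 : σ^[2] ((0 : K), (0 : K), (0 : K)) = σ (σ (0, 0, 0)) := by
      rw [show (2 : ℕ) = 1 + 1 from rfl]
      simp only [Function.iterate_add_apply, Function.iterate_one]
    rw [e2] at e
    simp only [hσ'] at e
    simp only [id_eq, Prod.mk.injEq] at e
    have ex := e.2.1
    have key : Q ^ 6 * A ^ 6 * (Q + 1) * (Q ^ 6 + 1) = 0 := by linear_combination ex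
    have hp1 : Q + 1 ≠ 0 := by
      intro h
      exact hQ1 (by linear_combination h - h2)
    have hp6 : Q ^ 6 + 1 ≠ 0 := by
      intro h
      exact hQ1 (by linear_combination (-Q) * h + hQ7 + Q * h2)
    exact (mul_ne_zero (mul_ne_zero (mul_ne_zero (pow_ne_zero 6 hQne)
      (pow_ne_zero 6 hAne)) hp1) hp6) key
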